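/- Let α be an infinite limit ordinal and Y = [0, α] (the ordinal α+1) with the order topology. Suppose {f_j}_{j ∈ J} is a net of homeomorphisms of Y such that for every ξ < α there exists j₀ ∈ J with f_j restricted to [0, ξ] equal to the identity for all j ≥ j₀. Then f_j converges uniformly to the identity of Y, i.e., for every entourage U of the diagonal in Y × Y (with respect to the unique compatible uniformity on the compact space Y) there is j₀ such that (f_j(x), x) ∈ U for all x ∈ Y and j ≥ j₀. -/

import Mathlib

open Ordinal

theorem stmt3 (α : Ordinal) (hα : Order.IsSuccLimit α)
    {J : Type*} [SemilatticeSup J] [Nonempty J]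
    (f : J → (Set.Iic α ≃ₜ Set.Iic α))
    (hf : ∀ ξ < α, ∃ j₀ : J, ∀ j ≥ j₀, ∀ x : Set.Iic α, (x : Ordinal) ≤ ξ → f j x = x) :
    ∀ U ∈ nhdsSet (Set.diagonal (Set.Iic α)),
      ∃ j₀ : J, ∀ j ≥ j₀, ∀ x : Set.Iic α, (f j x, x) ∈ U := by
  intro U hU
  have hdiag : Set.diagonal (Set.Iic α) ⊆ U := subset_of_mem_nhdsSet hU
  set a : Set.Iic α := ⟨α, Set.mem_Iic.mpr le_rfl⟩ with ha_def
  have haU : U ∈ nhds (a, a) :=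
    nhds_le_nhdsSet (show (a, a) ∈ Set.diagonal (Set.Iic α) from rfl) hU
  rw [nhds_prod_eq, Filter.mem_prod_iff] at haU
  obtain ⟨V, hV, W, hW, hVW⟩ := haU
  have hlt : ∃ l : Set.Iic α, l < a := ⟨⟨0, hα.pos.le⟩, by
    simp only [ha_def, Subtype.mk_lt_mk]; exact hα.pos⟩
  obtain ⟨l₁, hl₁, hV'⟩ := exists_Ioc_subset_of_mem_nhds hV hlt
  obtain ⟨l₂, hl₂, hW'⟩ := exists_Ioc_subset_of_mem_nhds hW hlt
  set l : Set.Iic α := max l₁ l₂ with hl_def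
  have hla : l < a := max_lt hl₁ hl₂
  have hξ : (l : Ordinal) < α := hla
  obtain ⟨j₀, hj₀⟩ := hf l hξ
  refine ⟨j₀, fun j hj x => ?_⟩
  rcases le_or_gt (x : Ordinal) l with hx | hx
  · rw [hj₀ j hj x hx]
    exact hdiag rfl
  · have hfx : (l : Ordinal) < (f j x : Ordinal) := by
      by_contra h
      push_neg at h
      have := hj₀ j hj (f j x) h
      have hxx : f j x = x := (f j).injective this
      rw [hxx] at h
      exact absurd hx (not_lt.mpr h)
    have h1 : f j x ∈ Set.Ioc l₁ a :=
      ⟨lt_of_le_of_lt (le_max_left l₁ l₂) hfx, (f j x).2⟩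
    have h2 : x ∈ Set.Ioc l₂ a :=
      ⟨lt_of_le_of_lt (le_max_right l₁ l₂) hx, x.2⟩
    exact hVW ⟨hV' h1, hW' h2⟩
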